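/- Minimax duality under interval uncertainty: Z_R = max over all probability vectors w = (w_A)_{A∈𝓕} (w_A ≥ 0, ∑_{A∈𝓕} w_A = 1) of min_{T∈𝓕} ∑_{A∈𝓕} w_A ( F(T, c^A) − F*(c^A) ), where for A ∈ 𝓕 the cost vector c^A ∈ 𝓘 is defined by c^A_e = c^-_e for e ∈ A and c^A_e = c^+_e for e ∉ A. -/

import Mathlib

open Finset

-- convex combination bounds
lemma comb_le_sup' {ι : Type*} [Fintype ι] [Nonempty ι] (w x : ι → ℝ)
    (h0 : ∀ i, 0 ≤ w i) (h1 : ∑ i, w i = 1) :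
    ∑ i, w i * x i ≤ Finset.univ.sup' Finset.univ_nonempty x := by
  calc ∑ i, w i * x i ≤ ∑ i, w i * Finset.univ.sup' Finset.univ_nonempty x := by
        refine Finset.sum_le_sum fun i _ => ?_
        exact mul_le_mul_of_nonneg_left (Finset.le_sup' x (Finset.mem_univ i)) (h0 i)
    _ = Finset.univ.sup' Finset.univ_nonempty x := by rw [← Finset.sum_mul, h1, one_mul]

lemma inf'_le_comb {ι : Type*} [Fintype ι] [Nonempty ι] (w x : ι → ℝ)
    (h0 : ∀ i, 0 ≤ w i) (h1 : ∑ i, w i = 1) :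
    Finset.univ.inf' Finset.univ_nonempty x ≤ ∑ i, w i * x i := by
  calc Finset.univ.inf' Finset.univ_nonempty x
      = ∑ i, w i * Finset.univ.inf' Finset.univ_nonempty x := by rw [← Finset.sum_mul, h1, one_mul]
    _ ≤ ∑ i, w i * x i := by
        refine Finset.sum_le_sum fun i _ => ?_
        exact mul_le_mul_of_nonneg_left (Finset.inf'_le x (Finset.mem_univ i)) (h0 i)

lemma matrix_minimax {ι : Type*} [Fintype ι] [Nonempty ι] [DecidableEq ι] (M : ι → ι → ℝ) :
    (⨅ q : stdSimplex ℝ ι, Finset.univ.sup' Finset.univ_nonempty (fun a => ∑ t, q.1 t * M t a))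
  = (⨆ w : stdSimplex ℝ ι, Finset.univ.inf' Finset.univ_nonempty (fun t => ∑ a, w.1 a * M t a)) := by
  classical
  obtain ⟨t0⟩ := ‹Nonempty ι›
  set G : (ι → ℝ) → ℝ := fun w => Finset.univ.inf' Finset.univ_nonempty (fun t => ∑ a, w a * M t a)
    with hG
  set Fq : (ι → ℝ) → ℝ := fun q => Finset.univ.sup' Finset.univ_nonempty (fun a => ∑ t, q t * M t a)
    with hFq
  have hGbdd : BddAbove (Set.range fun w : stdSimplex ℝ ι => G w.1) := by
    refine ⟨Finset.univ.sup' Finset.univ_nonempty (M t0), ?_⟩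
    rintro y ⟨w, rfl⟩
    refine le_trans (Finset.inf'_le _ (Finset.mem_univ t0)) ?_
    exact comb_le_sup' w.1 (M t0) w.2.1 w.2.2
  have hFbdd : BddBelow (Set.range fun q : stdSimplex ℝ ι => Fq q.1) := by
    refine ⟨Finset.univ.inf' Finset.univ_nonempty (fun t => M t t0), ?_⟩
    rintro y ⟨q, rfl⟩
    refine le_trans ?_ (Finset.le_sup' _ (Finset.mem_univ t0))
    exact inf'_le_comb q.1 (fun t => M t t0) q.2.1 q.2.2
  have hne : Nonempty (stdSimplex ℝ ι) := by
    refine ⟨⟨fun t => if t = t0 then 1 else 0, fun t => by positivity, by simp⟩⟩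
  -- weak duality
  have weak : ∀ q ∈ stdSimplex ℝ ι, ∀ w ∈ stdSimplex ℝ ι, G w ≤ Fq q := by
    intro q hq w hw
    have key : ∑ t, q t * ∑ a, w a * M t a = ∑ a, w a * ∑ t, q t * M t a := by
      simp_rw [Finset.mul_sum]
      rw [Finset.sum_comm]
      congr 1; ext a; congr 1; ext t; ring
    calc G w ≤ ∑ t, q t * ∑ a, w a * M t a := inf'_le_comb q _ hq.1 hq.2
      _ = ∑ a, w a * ∑ t, q t * M t a := key
      _ ≤ Fq q := comb_le_sup' w _ hw.1 hw.2
  set v : ℝ := ⨆ w : stdSimplex ℝ ι, G w.1 with hv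
  have hGle : ∀ w ∈ stdSimplex ℝ ι, G w ≤ v := fun w hw =>
    le_ciSup hGbdd (⟨w, hw⟩ : stdSimplex ℝ ι)
  -- strong duality: find q with Fq q ≤ v
  have strong : ∃ q ∈ stdSimplex ℝ ι, Fq q ≤ v := by
    set D : Set (ι → ℝ) := {x | ∀ t, v < x t} with hD
    set K : Set (ι → ℝ) := (fun w : ι → ℝ => fun t => ∑ a, w a * M t a) '' stdSimplex ℝ ι with hK
    have hDopen : IsOpen D := by
      have : D = ⋂ t, (fun x : ι → ℝ => x t) ⁻¹' Set.Ioi v := by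
        ext x; simp [hD, Set.mem_iInter]
      rw [this]
      exact isOpen_iInter_of_finite fun t => (continuous_apply t).isOpen_preimage _ isOpen_Ioi
    have hDconv : Convex ℝ D := by
      intro x hx y hy a b ha hb hab
      intro t
      simp only [Pi.add_apply, Pi.smul_apply, smul_eq_mul]
      rcases eq_or_lt_of_le ha with h | h
      · simp only [← h, zero_mul, zero_add]
        have : b = 1 := by linarith
        rw [this, one_mul]; exact hy t
      · have h1 : a * v < a * x t := by exact mul_lt_mul_of_pos_left (hx t) h
        have h2 : b * v ≤ b * y t := mul_le_mul_of_nonneg_left (le_of_lt (hy t)) hb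
        have h3 : a * v + b * v = v := by rw [← add_mul, hab, one_mul]
        linarith
    have hKconv : Convex ℝ K := by
      rintro _ ⟨w1, hw1, rfl⟩ _ ⟨w2, hw2, rfl⟩ a b ha hb hab
      refine ⟨a • w1 + b • w2, (convex_stdSimplex ℝ ι) hw1 hw2 ha hb hab, ?_⟩
      funext t
      simp only [Pi.add_apply, Pi.smul_apply, smul_eq_mul]
      simp only [Finset.mul_sum, ← Finset.sum_add_distrib]
      exact Finset.sum_congr rfl fun a' _ => by ring
    have hdisj : Disjoint D K := by
      rw [Set.disjoint_left]
      rintro x hxD ⟨w, hw, rfl⟩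
      have h1 : G w ≤ v := hGle w hw
      have h2 : v < G w := by
        rw [hG]
        rw [Finset.lt_inf'_iff]
        exact fun t _ => hxD t
      exact absurd h1 (not_le.2 h2)
    obtain ⟨f, u, hfd, hfk⟩ := geometric_hahn_banach_open hDconv hDopen hKconv hdisj
    set c : ι → ℝ := fun t => f (fun j => if t = j then (1:ℝ) else 0) with hc
    have hfx : ∀ x : ι → ℝ, f x = ∑ t, x t * c t := by
      intro x
      conv_lhs => rw [pi_eq_sum_univ x]
      rw [map_sum]
      refine Finset.sum_congr rfl fun t _ => ?_
      rw [ContinuousLinearMap.map_smul, smul_eq_mul]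
    have hmemD : ∀ s : ℝ, 0 < s → (fun _ : ι => v + s) ∈ D := fun s hs t => by simp [hs]
    have hconst : ∀ s : ℝ, f (fun _ : ι => s) = s * ∑ t, c t := by
      intro s; rw [hfx]; rw [Finset.mul_sum]
    have hcle : ∀ t, c t ≤ 0 := by
      intro t
      by_contra hpos
      push_neg at hpos
      set s : ℝ := max 1 ((u - f (fun _ => v + 1)) / c t + 1) with hs
      have hs1 : (1:ℝ) ≤ s := le_max_left _ _
      have hmem : (fun j => (v + 1) + (if t = j then s else 0)) ∈ D := by
        intro j
        by_cases h : t = j <;> simp [h] <;> linarith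
      have := hfd _ hmem
      have hsplit : f (fun j => (v + 1) + (if t = j then s else 0)) =
          f (fun _ => v + 1) + s * c t := by
        have : (fun j => (v + 1) + (if t = j then s else 0)) =
            (fun _ : ι => v + 1) + s • (fun j => if t = j then (1:ℝ) else 0) := by
          funext j; by_cases h : t = j <;> simp [h]
        rw [this, map_add, ContinuousLinearMap.map_smul, smul_eq_mul, hc]
      rw [hsplit] at this
      have hge : (u - f (fun _ => v + 1)) / c t + 1 ≤ s := le_max_right _ _
      have : (u - f (fun _ => v + 1)) / c t < s := by linarith
      rw [div_lt_iff₀ hpos] at this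
      linarith
    -- not all zero
    have hKne : (fun t => M t t0) ∈ K := by
      refine ⟨fun a => if a = t0 then 1 else 0, ⟨fun a => by positivity, by simp⟩, ?_⟩
      funext t; simp
    have hnz : ∃ t, c t < 0 := by
      by_contra hall
      push_neg at hall
      have hceq : ∀ t, c t = 0 := fun t => le_antisymm (hcle t) (hall t)
      have hf0 : ∀ x : ι → ℝ, f x = 0 := by
        intro x; rw [hfx]; simp [hceq]
      have h1 := hfd _ (hmemD 1 one_pos)
      have h2 := hfk _ hKne
      rw [hf0] at h1
      rw [hf0] at h2
      linarith
    obtain ⟨t1, ht1⟩ := hnz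
    set S : ℝ := ∑ t, c t with hS
    have hSneg : S < 0 := by
      have : ∑ t, c t < ∑ t : ι, (0:ℝ) :=
        Finset.sum_lt_sum (fun t _ => hcle t) ⟨t1, Finset.mem_univ t1, ht1⟩
      simpa using this
    have hvSu : v * S ≤ u := by
      refine le_of_forall_pos_le_add fun ε hε => ?_
      have hmem := hmemD (ε / (-S)) (div_pos hε (by linarith))
      have := hfd _ hmem
      rw [hconst] at this
      have : (v + ε / (-S)) * S < u := this
      have hexp : (v + ε / (-S)) * S = v * S - ε := by
        have hS0 : S ≠ 0 := hSneg.ne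
        rw [add_mul, div_mul_eq_mul_div, mul_comm, mul_div_assoc, div_neg, div_self hS0]
        ring
      linarith
    refine ⟨fun t => c t / S, ⟨fun t => div_nonneg_of_nonpos (hcle t) hSneg.le,
      by rw [← Finset.sum_div, ← hS, div_self hSneg.ne]⟩, ?_⟩
    rw [hFq]
    refine Finset.sup'_le _ _ fun a _ => ?_
    have hcol : (fun t => M t a) ∈ K := by
      refine ⟨fun a' => if a' = a then 1 else 0, ⟨fun a' => by positivity, by simp⟩, ?_⟩
      funext t; simp
    have h2 := hfk _ hcol
    rw [hfx] at h2
    have h3 : v * S ≤ ∑ t, M t a * c t := le_trans hvSu h2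
    have h4 : ∑ t, c t / S * M t a = (∑ t, M t a * c t) / S := by
      rw [Finset.sum_div]
      congr 1; ext t; ring
    rw [h4, div_le_iff_of_neg hSneg]
    linarith
  obtain ⟨q, hq, hqv⟩ := strong
  refine le_antisymm ?_ ?_
  · exact le_trans (ciInf_le hFbdd ⟨q, hq⟩) hqv
  · refine le_ciInf fun q' => ciSup_le fun w => weak q'.1 q'.2 w.1 w.2
-- helper: sup'/inf' over a finset equals sup'/inf' over univ of the subtype
lemma sup'_eq_univ_subtype {α : Type*} [LinearOrder α] {β : Type*} [DecidableEq β]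
    (s : Finset β) (hs : s.Nonempty) (f : β → α) :
    haveI : Nonempty {x // x ∈ s} := ⟨⟨hs.choose, hs.choose_spec⟩⟩
    s.sup' hs f = Finset.univ.sup' Finset.univ_nonempty (fun x : {x // x ∈ s} => f x.1) := by
  haveI : Nonempty {x // x ∈ s} := ⟨⟨hs.choose, hs.choose_spec⟩⟩
  refine le_antisymm ?_ ?_
  · exact Finset.sup'_le _ _ fun b hb =>
      Finset.le_sup' (f := fun x : {x // x ∈ s} => f x.1) (Finset.mem_univ (⟨b, hb⟩ : {x // x ∈ s}))
  · exact Finset.sup'_le _ _ fun b _ => Finset.le_sup' f b.2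

lemma inf'_eq_univ_subtype {α : Type*} [LinearOrder α] {β : Type*} [DecidableEq β]
    (s : Finset β) (hs : s.Nonempty) (f : β → α) :
    haveI : Nonempty {x // x ∈ s} := ⟨⟨hs.choose, hs.choose_spec⟩⟩
    s.inf' hs f = Finset.univ.inf' Finset.univ_nonempty (fun x : {x // x ∈ s} => f x.1) := by
  haveI : Nonempty {x // x ∈ s} := ⟨⟨hs.choose, hs.choose_spec⟩⟩
  refine le_antisymm ?_ ?_
  · exact Finset.le_inf' _ _ fun b _ => Finset.inf'_le f b.2
  · exact Finset.le_inf' _ _ fun b hb =>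
      Finset.inf'_le (f := fun x : {x // x ∈ s} => f x.1) (Finset.mem_univ (⟨b, hb⟩ : {x // x ∈ s}))
theorem minmax_eq_maxmin_interval
    {E : Type*} [Fintype E] [DecidableEq E] [Nonempty E]
    (𝓕 : Finset (Finset E)) (h𝓕 : 𝓕.Nonempty)
    (cm cp : E → ℝ) (hI : ∀ e, cm e ≤ cp e) :
    (⨅ p : (convexHull ℝ
        {x : E → ℝ | ∃ T ∈ 𝓕, x = fun e => if e ∈ T then (1 : ℝ) else 0} : Set (E → ℝ)),
      𝓕.sup' h𝓕 (fun T =>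
        (∑ e ∈ Finset.univ \ T, cp e * p.1 e) - ∑ e ∈ T, cm e * (1 - p.1 e)))
    =
    (⨆ w : stdSimplex ℝ {A // A ∈ 𝓕},
      𝓕.inf' h𝓕 (fun T =>
        ∑ A : {A // A ∈ 𝓕}, w.1 A *
          ((∑ e ∈ T, (if e ∈ A.1 then cm e else cp e))
            - 𝓕.inf' h𝓕 (fun T' => ∑ e ∈ T', if e ∈ A.1 then cm e else cp e)))) := by
  classical
  set ι := {A // A ∈ 𝓕} with hι
  haveI hne : Nonempty ι := ⟨⟨h𝓕.choose, h𝓕.choose_spec⟩⟩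
  have T0 : ι := Nonempty.some hne
  set cA : ι → E → ℝ := fun A e => if e ∈ A.1 then cm e else cp e with hcA
  set Fc : Finset E → ι → ℝ := fun T A => ∑ e ∈ T, cA A e with hFc
  set M : ι → ι → ℝ := fun T A => Fc T.1 A - Fc A.1 A with hM
  set χf : Finset E → E → ℝ := fun T e => if e ∈ T then 1 else 0 with hχ
  set gmap : (ι → ℝ) → (E → ℝ) := fun q e => ∑ T : ι, q T * χf T.1 e with hgmap
  set X : Set (E → ℝ) := {x | ∃ T ∈ 𝓕, x = fun e => if e ∈ T then (1:ℝ) else 0} with hX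
  set Obj : (E → ℝ) → ℝ := fun p => 𝓕.sup' h𝓕 (fun T =>
        (∑ e ∈ Finset.univ \ T, cp e * p e) - ∑ e ∈ T, cm e * (1 - p e)) with hObj
  set Fstar : ι → ℝ := fun A => 𝓕.inf' h𝓕 (fun T' => Fc T' A) with hFstar
  have step1 : (convexHull ℝ X : Set (E → ℝ)) = gmap '' stdSimplex ℝ ι := by
    apply Set.Subset.antisymm
    · apply convexHull_min
      · rintro x ⟨T, hT, rfl⟩
        refine ⟨fun T' : ι => if T' = ⟨T, hT⟩ then 1 else 0,
          ⟨fun t => by positivity, by convert Finset.sum_ite_eq' Finset.univ (⟨T, hT⟩ : ι) (fun _ => (1:ℝ)) <;> simp⟩, ?_⟩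
        funext e
        simp only [hgmap, hχ, ite_mul, one_mul, zero_mul, Finset.sum_ite_eq']
        rw [Finset.sum_eq_single (⟨T, hT⟩ : ι) (fun b _ hb => by simp [hb]) (by simp)]
        simp
      · rintro _ ⟨q1, hq1, rfl⟩ _ ⟨q2, hq2, rfl⟩ a b ha hb hab
        refine ⟨a • q1 + b • q2, (convex_stdSimplex ℝ ι) hq1 hq2 ha hb hab, ?_⟩
        funext e
        simp only [hgmap, Pi.add_apply, Pi.smul_apply, smul_eq_mul]
        simp only [Finset.mul_sum, ← Finset.sum_add_distrib]
        exact Finset.sum_congr rfl fun T _ => by ring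
    · rintro _ ⟨q, hq, rfl⟩
      have h1 : gmap q = ∑ T : ι, q T • χf T.1 := by
        funext e
        simp [hgmap, Finset.sum_apply, smul_eq_mul]
      rw [h1, ← Finset.centerMass_eq_of_sum_1 _ _ hq.2]
      refine Finset.centerMass_mem_convexHull _ (fun i _ => hq.1 i)
        (by rw [hq.2]; norm_num) (fun i _ => ⟨i.1, i.2, ?_⟩)
      funext e; simp [hχ]
  have claim1 : ∀ q ∈ stdSimplex ℝ ι,
      Obj (gmap q) = Finset.univ.sup' Finset.univ_nonempty
        (fun A : ι => ∑ T : ι, q T * M T A) := by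
    intro q hq
    simp only [hObj]
    rw [sup'_eq_univ_subtype 𝓕 h𝓕]
    refine Finset.sup'_congr _ rfl fun A _ => ?_
    have e1 : ∑ e ∈ A.1, cm e * (1 - gmap q e)
        = (∑ e ∈ A.1, cm e) - ∑ e ∈ A.1, cm e * gmap q e := by
      rw [← Finset.sum_sub_distrib]
      exact Finset.sum_congr rfl fun e _ => by ring
    have e2a : ∑ e ∈ Finset.univ \ A.1, cp e * gmap q e
        = ∑ e ∈ Finset.univ \ A.1, cA A e * gmap q e := by
      refine Finset.sum_congr rfl fun e he => ?_
      have heA : e ∉ A.1 := (Finset.mem_sdiff.1 he).2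
      simp only [hcA, heA, if_false]
    have e2b : ∑ e ∈ A.1, cm e * gmap q e = ∑ e ∈ A.1, cA A e * gmap q e := by
      refine Finset.sum_congr rfl fun e he => ?_
      simp only [hcA, he, if_true]
    have e2 : (∑ e ∈ Finset.univ \ A.1, cA A e * gmap q e)
        + ∑ e ∈ A.1, cA A e * gmap q e = ∑ e, cA A e * gmap q e := by
      have := Finset.sum_inter_add_sum_sdiff Finset.univ A.1 (fun e => cA A e * gmap q e)
      rw [Finset.univ_inter] at this
      linarith
    have e3 : ∑ e, cA A e * gmap q e = ∑ T : ι, q T * Fc T.1 A := by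
      calc ∑ e, cA A e * gmap q e
          = ∑ e, ∑ T : ι, q T * (cA A e * χf T.1 e) := by
            refine Finset.sum_congr rfl fun e _ => ?_
            simp only [hgmap, Finset.mul_sum]
            exact Finset.sum_congr rfl fun T _ => by ring
        _ = ∑ T : ι, ∑ e, q T * (cA A e * χf T.1 e) := Finset.sum_comm
        _ = ∑ T : ι, q T * Fc T.1 A := by
            refine Finset.sum_congr rfl fun T _ => ?_
            rw [← Finset.mul_sum]
            congr 1
            simp only [hχ, mul_ite, mul_one, mul_zero, hFc]
            rw [Finset.sum_ite_mem, Finset.univ_inter]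
    have e4 : (∑ e ∈ A.1, cm e) = Fc A.1 A := by
      rw [hFc]
      refine Finset.sum_congr rfl fun e he => ?_
      simp only [hcA, he, if_true]
    have e5 : ∑ T : ι, q T * M T A = (∑ T : ι, q T * Fc T.1 A) - Fc A.1 A := by
      simp only [hM, mul_sub]
      rw [Finset.sum_sub_distrib, ← Finset.sum_mul, hq.2, one_mul]
    linarith [e1, e2a, e2b, e2, e3, e4, e5]
  -- Step 2 : LHS equals inf over simplex
  have step2 : (⨅ p : (convexHull ℝ X : Set (E → ℝ)), Obj p.1)
      = ⨅ q : stdSimplex ℝ ι, Finset.univ.sup' Finset.univ_nonempty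
        (fun A : ι => ∑ T : ι, q.1 T * M T A) := by
    rw [iInf, iInf]
    refine congrArg sInf ?_
    ext y
    constructor
    · rintro ⟨⟨p, hp⟩, rfl⟩
      rw [step1] at hp
      obtain ⟨q, hq, rfl⟩ := hp
      exact ⟨⟨q, hq⟩, (claim1 q hq).symm⟩
    · rintro ⟨⟨q, hq⟩, rfl⟩
      exact ⟨⟨gmap q, step1 ▸ Set.mem_image_of_mem _ hq⟩, claim1 q hq⟩
  have step4 : (⨆ w : stdSimplex ℝ ι, Finset.univ.inf' Finset.univ_nonempty
        (fun T : ι => ∑ A : ι, w.1 A * M T A))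
      = ⨆ w : stdSimplex ℝ ι, 𝓕.inf' h𝓕 (fun T =>
        ∑ A : ι, w.1 A * (Fc T A - Fstar A)) := by
    haveI : Nonempty (stdSimplex ℝ ι) :=
      ⟨⟨fun t => if t = T0 then 1 else 0, fun t => by positivity, by convert Finset.sum_ite_eq' Finset.univ T0 (fun _ => (1:ℝ)) <;> simp⟩⟩
    have hFstarle : ∀ (B A : ι), Fstar A ≤ Fc B.1 A := fun B A => Finset.inf'_le _ B.2
    have hmono : ∀ (T : Finset E) (A B : ι), Fc T A - Fc B.1 A ≤ Fc T B - Fc B.1 B := by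
      intro T A B
      have hrep : ∀ d : ι, Fc T d - Fc B.1 d
          = (∑ e ∈ T \ B.1, cA d e) - ∑ e ∈ B.1 \ T, cA d e := by
        intro d
        have h1 := Finset.sum_inter_add_sum_sdiff T B.1 (cA d)
        have h2 := Finset.sum_inter_add_sum_sdiff B.1 T (cA d)
        rw [Finset.inter_comm] at h2
        simp only [hFc]
        linarith
      rw [hrep A, hrep B]
      have h1 : ∑ e ∈ T \ B.1, cA A e ≤ ∑ e ∈ T \ B.1, cA B e := by
        refine Finset.sum_le_sum fun e he => ?_
        have heB : e ∉ B.1 := (Finset.mem_sdiff.1 he).2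
        simp only [hcA, heB, if_false]
        split_ifs with h
        · exact hI e
        · exact le_rfl
      have h2 : ∑ e ∈ B.1 \ T, cA B e ≤ ∑ e ∈ B.1 \ T, cA A e := by
        refine Finset.sum_le_sum fun e he => ?_
        have heB : e ∈ B.1 := (Finset.mem_sdiff.1 he).1
        simp only [hcA, heB, if_true]
        split_ifs with h
        · exact le_rfl
        · exact hI e
      linarith
    choose σ0 hσmem hσval using fun A : ι =>
      Finset.exists_mem_eq_inf' h𝓕 (fun T' => Fc T' A)
    set σ : ι → ι := fun A => ⟨σ0 A, hσmem A⟩ with hσ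
    have hσle : ∀ (T A : ι), Fc T.1 A - Fstar A ≤ M T (σ A) := by
      intro T A
      have h1 : Fstar A = Fc (σ A).1 A := hσval A
      rw [h1, hM]
      exact hmono T.1 A (σ A)
    have hMle : ∀ (T A : ι), M T A ≤ Fc T.1 A - Fstar A := by
      intro T A
      have := hFstarle A A
      simp only [hM]
      linarith
    have hGbdd : BddAbove (Set.range fun w : stdSimplex ℝ ι =>
        Finset.univ.inf' Finset.univ_nonempty (fun T : ι => ∑ A : ι, w.1 A * M T A)) := by
      refine ⟨Finset.univ.sup' Finset.univ_nonempty (M T0), ?_⟩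
      rintro y ⟨w, rfl⟩
      exact le_trans (Finset.inf'_le _ (Finset.mem_univ T0))
        (comb_le_sup' w.1 (M T0) w.2.1 w.2.2)
    have hg2bdd : BddAbove (Set.range fun w : stdSimplex ℝ ι =>
        𝓕.inf' h𝓕 (fun T => ∑ A : ι, w.1 A * (Fc T A - Fstar A))) := by
      refine ⟨Finset.univ.sup' Finset.univ_nonempty (fun A : ι => Fc T0.1 A - Fstar A), ?_⟩
      rintro y ⟨w, rfl⟩
      exact le_trans (Finset.inf'_le _ T0.2) (comb_le_sup' w.1 _ w.2.1 w.2.2)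
    refine le_antisymm ?_ ?_
    · refine ciSup_le fun w => ?_
      refine le_trans ?_ (le_ciSup hg2bdd w)
      rw [inf'_eq_univ_subtype 𝓕 h𝓕]
      refine Finset.le_inf' _ _ fun T _ => ?_
      refine le_trans (Finset.inf'_le _ (Finset.mem_univ T)) ?_
      exact Finset.sum_le_sum fun A _ => mul_le_mul_of_nonneg_left (hMle T A) (w.2.1 A)
    · refine ciSup_le fun w => ?_
      set wh : ι → ℝ := fun B => ∑ A ∈ Finset.univ.filter (fun A : ι => σ A = B), w.1 A
        with hwh
      have hwhmem : wh ∈ stdSimplex ℝ ι := by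
        constructor
        · intro B
          exact Finset.sum_nonneg fun A _ => w.2.1 A
        · rw [hwh]
          rw [Finset.sum_fiberwise_of_maps_to (fun A _ => Finset.mem_univ (σ A)) w.1]
          exact w.2.2
      refine le_trans ?_ (le_ciSup hGbdd ⟨wh, hwhmem⟩)
      have hGwh : ∀ T : ι, ∑ B : ι, wh B * M T B = ∑ A : ι, w.1 A * M T (σ A) := by
        intro T
        rw [← Finset.sum_fiberwise_of_maps_to (g := σ)
          (fun A _ => Finset.mem_univ (σ A)) (fun A => w.1 A * M T (σ A))]
        refine Finset.sum_congr rfl fun B _ => ?_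
        rw [hwh, Finset.sum_mul]
        refine Finset.sum_congr rfl fun A hA => ?_
        rw [(Finset.mem_filter.1 hA).2]
      refine Finset.le_inf' _ _ fun T _ => ?_
      rw [hGwh T]
      refine le_trans (Finset.inf'_le _ T.2) ?_
      exact Finset.sum_le_sum fun A _ => mul_le_mul_of_nonneg_left (hσle T A) (w.2.1 A)
  calc (⨅ p : (convexHull ℝ X : Set (E → ℝ)), Obj p.1)
      = ⨅ q : stdSimplex ℝ ι, Finset.univ.sup' Finset.univ_nonempty
          (fun A : ι => ∑ T : ι, q.1 T * M T A) := step2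
    _ = ⨆ w : stdSimplex ℝ ι, Finset.univ.inf' Finset.univ_nonempty
          (fun T : ι => ∑ A : ι, w.1 A * M T A) := matrix_minimax M
    _ = ⨆ w : stdSimplex ℝ ι, 𝓕.inf' h𝓕 (fun T =>
          ∑ A : ι, w.1 A * (Fc T A - Fstar A)) := step4
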